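/- If m and n are positive integers with φ(m²) = φ(n²), then m = n. (The function n ↦ φ(n²) is injective on positive integers.) -/

import Mathlib

open Nat

lemma aux_totient_mul_dvd : ∀ a : ℕ, ∀ b, a ∣ b → Nat.totient (a * b) = a * Nat.totient b := by
  intro a
  induction a using Nat.strong_induction_on with
  | _ a ih =>
    intro b hab
    rcases eq_or_ne a 1 with rfl | ha1
    · simp
    rcases eq_or_ne a 0 with rfl | ha0
    · obtain rfl : b = 0 := by simpa using hab
      simp
    have hp := Nat.minFac_prime ha1
    obtain ⟨a', ha⟩ := a.minFac_dvd
    have hpb : a.minFac ∣ b := dvd_trans a.minFac_dvd hab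
    have ha'b : a' ∣ b := dvd_trans (Dvd.intro_left _ ha.symm) hab
    have ha' : a' < a := by
      have h2 : 2 ≤ a.minFac := hp.two_le
      have ha'0 : 0 < a' := by
        rcases Nat.eq_zero_or_pos a' with hc | h'
        · rw [hc, mul_zero] at ha; exact absurd ha ha0
        · exact h'
      calc a' < 2 * a' := by omega
      _ ≤ a.minFac * a' := Nat.mul_le_mul_right _ h2
      _ = a := ha.symm
    have key : a * b = a.minFac * (a' * b) := by rw [← mul_assoc, ← ha]
    rw [key, Nat.totient_mul_of_prime_of_dvd hp (hpb.trans (dvd_mul_left b a')),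
      ih a' ha' b ha'b, ← mul_assoc, ← ha]

lemma aux_totient_sq (n : ℕ) : Nat.totient (n ^ 2) = n * Nat.totient n := by
  rw [sq]
  exact aux_totient_mul_dvd n n dvd_rfl

lemma aux_not_dvd_totient (p : ℕ) (hp : p.Prime) :
    ∀ n, n ≠ 0 → (∀ r ∈ n.primeFactors, r < p) → ¬ p ∣ Nat.totient n := by
  intro n
  induction n using Nat.strong_induction_on with
  | _ n ih =>
    intro hn0 hr hdvd
    rcases eq_or_ne n 1 with rfl | hn1
    · rw [Nat.totient_one, Nat.dvd_one] at hdvd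
      exact hp.one_lt.ne' hdvd
    have hq := Nat.minFac_prime hn1
    set q := n.minFac with hqdef
    have hqn : q ∣ n := n.minFac_dvd
    have hqlt : q < p := hr q (Nat.mem_primeFactors.mpr ⟨hq, hqn, hn0⟩)
    set a := n.factorization q with hadef
    have ha : 0 < a := hq.factorization_pos_of_dvd hn0 hqn
    set k := ordCompl[q] n with hkdef
    have hnk : q ^ a * k = n := Nat.ordProj_mul_ordCompl_eq_self n q
    have hk0 : k ≠ 0 := by
      intro h
      rw [h, mul_zero] at hnk
      exact hn0 hnk.symm
    have hqk : ¬ q ∣ k := Nat.not_dvd_ordCompl hq hn0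
    have hcop : Nat.Coprime (q ^ a) k :=
      Nat.Coprime.pow_left _ ((Nat.Prime.coprime_iff_not_dvd hq).mpr hqk)
    have htot : Nat.totient n = q ^ (a - 1) * (q - 1) * Nat.totient k := by
      rw [← hnk, Nat.totient_mul hcop, Nat.totient_prime_pow hq ha]
    rw [htot] at hdvd
    rcases (Nat.Prime.dvd_mul hp).mp hdvd with h | h
    · rcases (Nat.Prime.dvd_mul hp).mp h with h | h
      · have h2 := (Nat.prime_dvd_prime_iff_eq hp hq).mp (hp.dvd_of_dvd_pow h)
        rw [h2] at hqlt
        exact lt_irrefl _ hqlt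
      · have h1 : 0 < q - 1 := by have := hq.two_le; omega
        have h3 := Nat.le_of_dvd h1 h
        have := hq.two_le
        omega
    · have hklt : k < n := by
        have h2 : 2 ≤ q ^ a := by
          calc 2 ≤ q := hq.two_le
          _ ≤ q ^ a := Nat.le_self_pow (by omega) q
        have hk1 : 0 < k := Nat.pos_of_ne_zero hk0
        nlinarith [hnk.le]
      refine ih k hklt hk0 (fun r hrk => ?_) h
      refine hr r ?_
      obtain ⟨hr1, hr2, _⟩ := Nat.mem_primeFactors.mp hrk
      exact Nat.mem_primeFactors.mpr ⟨hr1, hr2.trans ⟨q ^ a, by rw [← hnk]; ring⟩, hn0⟩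

lemma aux_not_dvd_self_totient (p : ℕ) (hp : p.Prime) (n : ℕ) (hn0 : n ≠ 0)
    (hr : ∀ r ∈ n.primeFactors, r < p) : ¬ p ∣ n * Nat.totient n := by
  intro h
  rcases (Nat.Prime.dvd_mul hp).mp h with h | h
  · exact absurd (hr p (Nat.mem_primeFactors.mpr ⟨hp, h, hn0⟩)) (lt_irrefl p)
  · exact aux_not_dvd_totient p hp n hn0 hr h

lemma aux_pow_mul_cancel {p : ℕ} (hp : p.Prime) :
    ∀ s t x y : ℕ, ¬ p ∣ x → ¬ p ∣ y → p ^ s * x = p ^ t * y → s = t ∧ x = y := by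
  have base : ∀ s t x y : ℕ, s ≤ t → ¬ p ∣ x → ¬ p ∣ y → p ^ s * x = p ^ t * y →
      s = t ∧ x = y := by
    intro s t x y hst hx hy h
    obtain ⟨d, rfl⟩ := Nat.exists_eq_add_of_le hst
    rw [pow_add, mul_assoc] at h
    have hx' : x = p ^ d * y :=
      Nat.eq_of_mul_eq_mul_left (pow_pos hp.pos s) h
    rcases Nat.eq_zero_or_pos d with rfl | hd
    · simp at hx'
      exact ⟨by omega, hx'⟩
    · exfalso
      exact hx (hx' ▸ Dvd.dvd.mul_right (dvd_pow_self p hd.ne') y)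
  intro s t x y hx hy h
  rcases le_total s t with hst | hst
  · exact base s t x y hst hx hy h
  · obtain ⟨h1, h2⟩ := base t s y x hst hy hx h.symm
    exact ⟨h1.symm, h2.symm⟩

lemma aux_key : ∀ m : ℕ, 0 < m → ∀ n : ℕ, 0 < n →
    m * Nat.totient m = n * Nat.totient n → m = n := by
  intro m
  induction m using Nat.strong_induction_on with
  | _ m ih =>
    intro hm n hn h
    rcases eq_or_ne m 1 with rfl | hm1
    · rw [one_mul, Nat.totient_one] at h
      exact (Nat.eq_one_of_mul_eq_one_right h.symm).symm
    rcases eq_or_ne n 1 with rfl | hn1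
    · rw [one_mul, Nat.totient_one] at h
      exact Nat.eq_one_of_mul_eq_one_right h
    have hm0 : m ≠ 0 := hm.ne'
    have hn0 : n ≠ 0 := hn.ne'
    -- the largest prime factor of m * n
    have hmn1 : m * n ≠ 1 := by
      intro hc
      exact hm1 (Nat.eq_one_of_mul_eq_one_right hc)
    have hne : (m * n).primeFactors.Nonempty :=
      Nat.nonempty_primeFactors.mpr (by
        rcases Nat.lt_or_ge (m * n) 2 with h' | h'
        · interval_cases h : m * n <;> simp_all
        · omega)
    set p := (m * n).primeFactors.max' hne with hpdef
    have hpmem := (m * n).primeFactors.max'_mem hne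
    obtain ⟨hpp, hpdvd, _⟩ := Nat.mem_primeFactors.mp hpmem
    have hmax : ∀ r ∈ (m * n).primeFactors, r ≤ p := fun r hr =>
      Finset.le_max' _ r hr
    -- p divides both m and n
    have hlt : ∀ x : ℕ, x ≠ 0 → x ∣ m * n → ¬ p ∣ x → ∀ r ∈ x.primeFactors, r < p := by
      intro x hx0 hxdvd hpx r hr
      obtain ⟨hr1, hr2, _⟩ := Nat.mem_primeFactors.mp hr
      have : r ≤ p := hmax r (Nat.mem_primeFactors.mpr ⟨hr1, hr2.trans hxdvd, by positivity⟩)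
      rcases lt_or_eq_of_le this with h' | h'
      · exact h'
      · exact absurd (h' ▸ hr2) hpx
    have hpm : p ∣ m := by
      by_contra hpm
      have h1 : ¬ p ∣ m * Nat.totient m :=
        aux_not_dvd_self_totient p hpp m hm0 (hlt m hm0 (Dvd.intro n rfl) hpm)
      have hpn : p ∣ n := (hpp.dvd_mul.mp hpdvd).resolve_left hpm
      exact h1 (h ▸ Dvd.dvd.mul_right hpn _)
    have hpn : p ∣ n := by
      by_contra hpn
      have h1 : ¬ p ∣ n * Nat.totient n :=
        aux_not_dvd_self_totient p hpp n hn0 (hlt n hn0 (Dvd.intro_left m rfl) hpn)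
      exact h1 (h ▸ Dvd.dvd.mul_right hpm _)
    -- decompose m and n
    set a := m.factorization p with hadef
    set b := n.factorization p with hbdef
    have ha : 0 < a := hpp.factorization_pos_of_dvd hm0 hpm
    have hb : 0 < b := hpp.factorization_pos_of_dvd hn0 hpn
    set m₁ := ordCompl[p] m with hm₁def
    set n₁ := ordCompl[p] n with hn₁def
    have hmm : p ^ a * m₁ = m := Nat.ordProj_mul_ordCompl_eq_self m p
    have hnn : p ^ b * n₁ = n := Nat.ordProj_mul_ordCompl_eq_self n p
    have hm₁0 : m₁ ≠ 0 := by
      intro hc; rw [hc, mul_zero] at hmm; exact hm0 hmm.symm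
    have hn₁0 : n₁ ≠ 0 := by
      intro hc; rw [hc, mul_zero] at hnn; exact hn0 hnn.symm
    have hpm₁ : ¬ p ∣ m₁ := Nat.not_dvd_ordCompl hpp hm0
    have hpn₁ : ¬ p ∣ n₁ := Nat.not_dvd_ordCompl hpp hn0
    have hcm : Nat.Coprime (p ^ a) m₁ :=
      Nat.Coprime.pow_left _ ((Nat.Prime.coprime_iff_not_dvd hpp).mpr hpm₁)
    have hcn : Nat.Coprime (p ^ b) n₁ :=
      Nat.Coprime.pow_left _ ((Nat.Prime.coprime_iff_not_dvd hpp).mpr hpn₁)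
    have hfm : m * Nat.totient m =
        p ^ (a + (a - 1)) * ((p - 1) * (m₁ * Nat.totient m₁)) := by
      rw [← hmm, Nat.totient_mul hcm, Nat.totient_prime_pow hpp ha, pow_add]
      ring
    have hfn : n * Nat.totient n =
        p ^ (b + (b - 1)) * ((p - 1) * (n₁ * Nat.totient n₁)) := by
      rw [← hnn, Nat.totient_mul hcn, Nat.totient_prime_pow hpp hb, pow_add]
      ring
    have hndvd : ∀ x : ℕ, x ≠ 0 → x ∣ m * n → ¬ p ∣ x →
        ¬ p ∣ (p - 1) * (x * Nat.totient x) := by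
      intro x hx0 hxdvd hpx hc
      rcases hpp.dvd_mul.mp hc with h' | h'
      · have := Nat.le_of_dvd (by have := hpp.two_le; omega) h'
        have := hpp.two_le
        omega
      · exact aux_not_dvd_self_totient p hpp x hx0 (hlt x hx0 hxdvd hpx) h'
    have heq : p ^ (a + (a - 1)) * ((p - 1) * (m₁ * Nat.totient m₁)) =
        p ^ (b + (b - 1)) * ((p - 1) * (n₁ * Nat.totient n₁)) := by
      rw [← hfm, ← hfn, h]
    obtain ⟨hab, hxy⟩ := aux_pow_mul_cancel hpp _ _ _ _
      (hndvd m₁ hm₁0 ((Nat.ordCompl_dvd m p).trans (Dvd.intro n rfl)) hpm₁)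
      (hndvd n₁ hn₁0 ((Nat.ordCompl_dvd n p).trans (Dvd.intro_left m rfl)) hpn₁)
      heq
    have hab' : a = b := by omega
    have hxy' : m₁ * Nat.totient m₁ = n₁ * Nat.totient n₁ :=
      Nat.eq_of_mul_eq_mul_left (by have := hpp.two_le; omega) hxy
    have hm₁lt : m₁ < m := by
      have h2 : 2 ≤ p ^ a := by
        calc 2 ≤ p := hpp.two_le
        _ ≤ p ^ a := Nat.le_self_pow ha.ne' p
      have hk1 : 0 < m₁ := Nat.pos_of_ne_zero hm₁0
      nlinarith [hmm.le]
    have : m₁ = n₁ := ih m₁ hm₁lt (Nat.pos_of_ne_zero hm₁0) n₁ (Nat.pos_of_ne_zero hn₁0) hxy'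
    rw [← hmm, ← hnn, hab', this]

theorem stmt1 (m n : ℕ) (hm : 0 < m) (hn : 0 < n)
    (h : Nat.totient (m ^ 2) = Nat.totient (n ^ 2)) : m = n := by
  rw [aux_totient_sq, aux_totient_sq] at h
  exact aux_key m hm n hn h
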